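/- arXiv:0710.4409 — 4 statements merged into one kernel-verified Lean document; each statement's English description precedes it below -/
import Mathlib

section
/- Let r ≥ 2 and b be coprime positive integers with 0 < b < r, and let n be an integer with 2 ≤ n ≤ ⌊(r+1)/2⌋. Then Σ_{j=1}^{n−1} \overline{bj}(r−\overline{bj})/(2r) ≥ Σ_{j=1}^{n−1} j(r−j)/(2r), where \overline{x} denotes the smallest nonnegative residue of x modulo r. -/
/-- If `f` is monotone and `S` is a finset of `m` positive naturals, then the
sum of `f` over `S` dominates the sum of `f` over `{1, ..., m}`. -/
lemma aux_sum_mono (f : ℕ → ℚ) (hf : Monotone f) :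
    ∀ m : ℕ, ∀ S : Finset ℕ, S.card = m → 0 ∉ S →
      ∑ j ∈ Finset.Icc 1 m, f j ≤ ∑ s ∈ S, f s := by
  intro m
  induction m with
  | zero => intro S hS h0; simp [Finset.card_eq_zero.mp hS]
  | succ m ih =>
    intro S hS h0
    have hne : S.Nonempty := Finset.card_pos.mp (by omega)
    set M := S.max' hne with hM
    have hMem : M ∈ S := S.max'_mem hne
    have hsub : S ⊆ Finset.Icc 1 M := by
      intro s hs
      refine Finset.mem_Icc.mpr ⟨?_, S.le_max' s hs⟩
      rcases Nat.eq_zero_or_pos s with h | h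
      · exact absurd (h ▸ hs) h0
      · exact h
    have hMle : m + 1 ≤ M := by
      have h := Finset.card_le_card hsub
      rw [Nat.card_Icc, hS] at h
      omega
    have hcard : (S.erase M).card = m := by
      rw [Finset.card_erase_of_mem hMem, hS]
      omega
    have h0' : 0 ∉ S.erase M := fun h => h0 (Finset.mem_of_mem_erase h)
    have hih := ih (S.erase M) hcard h0'
    have hsum : ∑ s ∈ S, f s = ∑ s ∈ S.erase M, f s + f M :=
      (Finset.sum_erase_add S f hMem).symm
    rw [Finset.sum_Icc_succ_top (by omega : 1 ≤ m + 1), hsum]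
    exact add_le_add hih (hf hMle)

/-- Among singularities of index r, the type (1/r)(1,-1,1) minimizes Reid's
correction term l(Q,n) for n ≤ ⌊(r+1)/2⌋. -/
theorem stmt_2 (r b n : ℕ) (hr : 2 ≤ r) (hb0 : 0 < b) (hbr : b < r)
    (hcop : Nat.Coprime b r) (hn : 2 ≤ n) (hn2 : n ≤ (r + 1) / 2) :
    ∑ j ∈ Finset.Icc 1 (n - 1),
        ((b * j % r : ℕ) : ℚ) * ((r : ℚ) - (b * j % r : ℕ)) / (2 * r) ≥
      ∑ j ∈ Finset.Icc 1 (n - 1), (j : ℚ) * ((r : ℚ) - j) / (2 * r) := by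
  have hr0 : 0 < r := by omega
  set m := n - 1 with hm
  have hm1 : 1 ≤ m := by omega
  have hmr : 2 * m + 1 ≤ r := by omega
  set g : ℕ → ℕ := fun j => min (b * j % r) (r - b * j % r) with hg
  -- residues are nonzero
  have hane : ∀ j ∈ Finset.Icc 1 m, 1 ≤ b * j % r ∧ b * j % r ≤ r - 1 := by
    intro j hj
    rw [Finset.mem_Icc] at hj
    have hlt := Nat.mod_lt (b * j) hr0
    constructor
    · by_contra h
      have h0 : b * j % r = 0 := by omega
      have hdvd : r ∣ b * j := Nat.dvd_of_mod_eq_zero h0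
      have hrj : r ∣ j := hcop.symm.dvd_of_dvd_mul_left hdvd
      have := Nat.le_of_dvd (by omega : 0 < j) hrj
      omega
    · omega
  have hg1 : ∀ j ∈ Finset.Icc 1 m, 1 ≤ g j ∧ 2 * g j ≤ r := by
    intro j hj
    obtain ⟨h1, h2⟩ := hane j hj
    simp only [hg]
    rcases min_cases (b * j % r) (r - b * j % r) with ⟨h, _⟩ | ⟨h, _⟩ <;> omega
  -- injectivity of g on Icc 1 m
  have hinj : ∀ j ∈ Finset.Icc 1 m, ∀ k ∈ Finset.Icc 1 m, g j = g k → j = k := by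
    intro j hj k hk hgeq
    obtain ⟨haj1, haj2⟩ := hane j hj
    obtain ⟨hak1, hak2⟩ := hane k hk
    rw [Finset.mem_Icc] at hj hk
    have hcases : b * j % r = b * k % r ∨ b * j % r + b * k % r = r := by
      simp only [hg] at hgeq
      rcases min_cases (b * j % r) (r - b * j % r) with ⟨h1, h2⟩ | ⟨h1, h2⟩ <;>
        rcases min_cases (b * k % r) (r - b * k % r) with ⟨h3, h4⟩ | ⟨h3, h4⟩ <;> omega
    rcases hcases with heq | hsum
    · have heq' : b * j ≡ b * k [MOD r] := heq
      have hmod : j ≡ k [MOD r] := Nat.ModEq.cancel_left_of_coprime hcop.symm heq'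
      have hjk : j % r = k % r := hmod
      rwa [Nat.mod_eq_of_lt (by omega), Nat.mod_eq_of_lt (by omega)] at hjk
    · exfalso
      have hdvd : r ∣ b * j + b * k := by
        apply Nat.dvd_of_mod_eq_zero
        rw [Nat.add_mod, hsum, Nat.mod_self]
      rw [← Nat.mul_add] at hdvd
      have hrjk : r ∣ j + k := hcop.symm.dvd_of_dvd_mul_left hdvd
      have := Nat.le_of_dvd (by omega : 0 < j + k) hrjk
      omega
  -- the comparison function
  set f : ℕ → ℚ := fun x => ((min x (r / 2) : ℕ) : ℚ) *
      ((r : ℚ) - ((min x (r / 2) : ℕ) : ℚ)) / (2 * r) with hf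
  have hfmono : Monotone f := by
    intro x y hxy
    simp only [hf]
    set a := min x (r / 2) with ha
    set c := min y (r / 2) with hc
    have hac : a ≤ c := min_le_min hxy le_rfl
    have hc2 : 2 * c ≤ r := by
      have h1 := Nat.min_le_right y (r / 2)
      have h2 := Nat.div_mul_le_self r 2
      omega
    have hrQ : (0:ℚ) < 2 * (r:ℚ) := by
      have : (0:ℚ) < r := by exact_mod_cast hr0
      linarith
    rw [div_le_div_iff_of_pos_right hrQ]
    have h1 : (a : ℚ) ≤ c := by exact_mod_cast hac
    have h2 : 2 * (c : ℚ) ≤ r := by exact_mod_cast hc2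
    nlinarith [mul_nonneg (sub_nonneg.mpr h1) (by linarith : (0:ℚ) ≤ (r:ℚ) - a - c)]
  -- RHS equals sum of f over Icc 1 m
  have hRHS : ∑ j ∈ Finset.Icc 1 m, (j : ℚ) * ((r : ℚ) - j) / (2 * r)
      = ∑ j ∈ Finset.Icc 1 m, f j := by
    apply Finset.sum_congr rfl
    intro j hj
    rw [Finset.mem_Icc] at hj
    have hjr : j ≤ r / 2 := by omega
    simp only [hf, min_eq_left hjr]
  -- LHS equals sum of f ∘ g over Icc 1 m
  have hLHS : ∑ j ∈ Finset.Icc 1 m,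
        ((b * j % r : ℕ) : ℚ) * ((r : ℚ) - (b * j % r : ℕ)) / (2 * r)
      = ∑ j ∈ Finset.Icc 1 m, f (g j) := by
    apply Finset.sum_congr rfl
    intro j hj
    obtain ⟨h1, h2⟩ := hane j hj
    obtain ⟨h3, h4⟩ := hg1 j hj
    have hgr : g j ≤ r / 2 := by omega
    simp only [hf, min_eq_left hgr]
    simp only [hg]
    rcases min_cases (b * j % r) (r - b * j % r) with ⟨h5, h6⟩ | ⟨h5, h6⟩
    · rw [h5]
    · rw [h5]
      have hle : b * j % r ≤ r := by omega
      push_cast [Nat.cast_sub hle]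
      ring
  rw [ge_iff_le, hRHS, hLHS]
  rw [← Finset.sum_image (g := g) hinj]
  apply aux_sum_mono f hfmono
  · rw [Finset.card_image_of_injOn hinj, Nat.card_Icc]
    omega
  · intro h0
    rw [Finset.mem_image] at h0
    obtain ⟨j, hj, hgj⟩ := h0
    have := hg1 j hj
    omega
end

section
/- Let α and β be integers with 1 ≤ β ≤ α, let b be a positive integer coprime to α with 0 < b < α, and let n be an integer with 2 ≤ n ≤ min(β, ⌊(α+1)/2⌋). Then Σ_{j=1}^{n−1} \overline{bj}(α−\overline{bj})/(2α) ≥ Σ_{j=1}^{n−1} j(β−j)/(2β), where \overline{x} is the residue of x mod α. -/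
lemma aux_sum_card (H : ℕ → ℚ) (hH : Monotone H) :
    ∀ m : ℕ, ∀ S : Finset ℕ, S.card = m → (∀ s ∈ S, 1 ≤ s) →
      ∑ j ∈ Finset.Icc 1 m, H j ≤ ∑ s ∈ S, H s := by
  intro m
  induction m with
  | zero => intro S hc _; rw [Finset.card_eq_zero.mp hc]; simp
  | succ m ih =>
    intro S hc h1
    have hne : S.Nonempty := Finset.card_pos.mp (by omega)
    set a := S.max' hne with ha
    have haS : a ∈ S := S.max'_mem hne
    have hsub : S ⊆ Finset.Icc 1 a := by
      intro s hs
      exact Finset.mem_Icc.mpr ⟨h1 s hs, S.le_max' s hs⟩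
    have hcard_le : S.card ≤ a := by
      have := Finset.card_le_card hsub
      simpa using this
    have herase : (S.erase a).card = m := by
      rw [Finset.card_erase_of_mem haS, hc]
      omega
    have hIH := ih (S.erase a) herase (fun s hs => h1 s (Finset.mem_of_mem_erase hs))
    have hsplit : ∑ j ∈ Finset.Icc 1 (m + 1), H j
        = ∑ j ∈ Finset.Icc 1 m, H j + H (m + 1) := by
      rw [← Finset.sum_Icc_succ_top (by omega)]
    have hS : ∑ s ∈ S, H s = ∑ s ∈ S.erase a, H s + H a := by
      rw [Finset.sum_erase_add _ _ haS]
    rw [hsplit, hS]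
    have : H (m + 1) ≤ H a := hH (by omega)
    linarith

/-- l((1/α)(a,-a,1), n) ≥ l((1/β)(1,-1,1), n) for n ≤ min(β, ⌊(α+1)/2⌋). -/
theorem stmt_3 (α β b n : ℕ) (hβ : 1 ≤ β) (hβα : β ≤ α)
    (hb0 : 0 < b) (hbα : b < α) (hcop : Nat.Coprime b α)
    (hn : 2 ≤ n) (hn1 : n ≤ β) (hn2 : n ≤ (α + 1) / 2) :
    ∑ j ∈ Finset.Icc 1 (n - 1),
        ((b * j % α : ℕ) : ℚ) * ((α : ℚ) - (b * j % α : ℕ)) / (2 * α) ≥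
      ∑ j ∈ Finset.Icc 1 (n - 1), (j : ℚ) * ((β : ℚ) - j) / (2 * β) := by
  have hα : 2 ≤ α := by omega
  have hαQ : (0:ℚ) < α := by positivity
  set M := α / 2 with hM
  set g : ℕ → ℕ := fun j => min (b * j % α) (α - b * j % α) with hg
  -- basic properties of residues
  have hres_pos : ∀ j, 1 ≤ j → j < α → 1 ≤ b * j % α := by
    intro j hj1 hjα
    rcases Nat.eq_zero_or_pos (b * j % α) with h | h
    · exfalso
      have hdvd : α ∣ b * j := Nat.dvd_of_mod_eq_zero h
      have : α ∣ j := (Nat.Coprime.symm hcop).dvd_of_dvd_mul_left hdvd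
      have := Nat.le_of_dvd (by omega) this
      omega
    · exact h
  have hjlt : ∀ j ∈ Finset.Icc 1 (n - 1), 1 ≤ j ∧ j < α := by
    intro j hj
    have := Finset.mem_Icc.mp hj
    omega
  have hg_pos : ∀ j ∈ Finset.Icc 1 (n - 1), 1 ≤ g j := by
    intro j hj
    obtain ⟨h1, h2⟩ := hjlt j hj
    have hx := hres_pos j h1 h2
    have hxlt : b * j % α < α := Nat.mod_lt _ (by omega)
    simp only [hg, le_min_iff]
    omega
  have hg_le : ∀ j, g j ≤ M := by
    intro j
    have hxle : b * j % α ≤ α := (Nat.mod_lt _ (by omega : 0 < α)).le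
    have : 2 * g j ≤ α := by
      simp only [hg]
      omega
    omega
  have h2M : 2 * M ≤ α := by omega
  -- injectivity of g on Icc 1 (n-1)
  have hinj : Set.InjOn g (Finset.Icc 1 (n - 1) : Finset ℕ) := by
    intro j hj k hk hjk
    simp only [Finset.coe_Icc, Set.mem_Icc] at hj hk
    set x := b * j % α with hx
    set y := b * k % α with hy
    have hxlt : x < α := Nat.mod_lt _ (by omega)
    have hylt : y < α := Nat.mod_lt _ (by omega)
    have hcases : x = y ∨ x + y = α := by
      simp only [hg] at hjk
      rcases min_cases x (α - x) with ⟨e1, _⟩ | ⟨e1, _⟩ <;>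
        rcases min_cases y (α - y) with ⟨e2, _⟩ | ⟨e2, _⟩ <;> omega
    rcases hcases with hcase | hcase
    · -- x = y ⇒ j ≡ k mod α ⇒ j = k
      have hmod : b * j ≡ b * k [MOD α] := hcase
      have : j ≡ k [MOD α] := hmod.cancel_left_of_coprime hcop.symm
      have hj' : j % α = j := Nat.mod_eq_of_lt (by omega)
      have hk' : k % α = k := Nat.mod_eq_of_lt (by omega)
      unfold Nat.ModEq at this
      omega
    · -- x + y = α impossible
      exfalso
      have hdvd : α ∣ b * j + b * k := by
        have : (b * j + b * k) % α = (x + y) % α := Nat.add_mod _ _ _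
        rw [hcase, Nat.mod_self] at this
        exact Nat.dvd_of_mod_eq_zero this
      have hdvd2 : α ∣ b * (j + k) := by rw [Nat.mul_add]; exact hdvd
      have : α ∣ j + k := (Nat.Coprime.symm hcop).dvd_of_dvd_mul_left hdvd2
      have hjk2 : j + k ≤ 2 * (n - 1) := by omega
      have h2n : 2 * ((α + 1) / 2) ≤ α + 1 := by omega
      have hlt : j + k < α := by omega
      have hpos : 0 < j + k := by omega
      have := Nat.le_of_dvd hpos this
      omega
  -- the monotone function H
  set H : ℕ → ℚ := fun t => ((min t M : ℕ) : ℚ) * ((α : ℚ) - (min t M : ℕ)) / (2 * α)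
    with hH
  have hHmono : Monotone H := by
    intro t u htu
    simp only [hH]
    have h1 : min t M ≤ min u M := min_le_min htu le_rfl
    have h2 : min u M ≤ M := min_le_right _ _
    have hsum : min t M + min u M ≤ α := by omega
    rw [div_le_div_iff₀ (by positivity) (by positivity)]
    have c1 : ((min t M : ℕ) : ℚ) ≤ ((min u M : ℕ) : ℚ) := by exact_mod_cast h1
    have c2 : ((min t M : ℕ) : ℚ) + ((min u M : ℕ) : ℚ) ≤ (α : ℚ) := by exact_mod_cast hsum
    have c0 : (0:ℚ) ≤ ((min t M : ℕ) : ℚ) := by positivity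
    nlinarith [mul_nonneg (sub_nonneg.2 c1) (by linarith : (0:ℚ) ≤ (α:ℚ) - ((min t M : ℕ):ℚ) - ((min u M : ℕ):ℚ)), hαQ, mul_pos hαQ hαQ]
  -- termwise: LHS term = H (g j)
  have hterm : ∀ j ∈ Finset.Icc 1 (n - 1),
      ((b * j % α : ℕ) : ℚ) * ((α : ℚ) - (b * j % α : ℕ)) / (2 * α) = H (g j) := by
    intro j hj
    have hgle : g j ≤ M := hg_le j
    have hmin : min (g j) M = g j := min_eq_left hgle
    simp only [hH, hmin]
    set x := b * j % α with hx
    have hxlt : x < α := Nat.mod_lt _ (by omega)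
    rcases min_cases x (α - x) with ⟨e1, _⟩ | ⟨e1, _⟩
    · rw [show g j = x from e1]
    · rw [show g j = α - x from e1]
      have : ((α - x : ℕ) : ℚ) = (α : ℚ) - x := by
        push_cast [Nat.cast_sub hxlt.le]; ring
      rw [this]; ring
  rw [Finset.sum_congr rfl hterm]
  -- move to image set
  have himg : ∑ j ∈ Finset.Icc 1 (n - 1), H (g j)
      = ∑ s ∈ (Finset.Icc 1 (n - 1)).image g, H s := by
    rw [Finset.sum_image (fun x hx y hy => hinj (by simpa using hx) (by simpa using hy))]
  rw [himg]
  have hcard : ((Finset.Icc 1 (n - 1)).image g).card = n - 1 := by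
    rw [Finset.card_image_of_injOn hinj, Nat.card_Icc]
    omega
  have hmem1 : ∀ s ∈ (Finset.Icc 1 (n - 1)).image g, 1 ≤ s := by
    intro s hs
    obtain ⟨j, hj, rfl⟩ := Finset.mem_image.mp hs
    exact hg_pos j hj
  have haux := aux_sum_card H hHmono (n - 1) _ hcard hmem1
  refine le_trans ?_ haux
  -- Σ_{j=1}^{n-1} j(β-j)/(2β) ≤ Σ H j
  apply Finset.sum_le_sum
  intro j hj
  obtain ⟨hj1, hj2⟩ := Finset.mem_Icc.mp hj
  have hjM : j ≤ M := by omega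
  have hmin : min j M = j := min_eq_left hjM
  simp only [hH, hmin]
  have hjβ : j ≤ β := by omega
  have hβQ : (0:ℚ) < β := by positivity
  rw [div_le_div_iff₀ (by positivity) (by positivity)]
  have c1 : ((j:ℚ)) ≤ (β:ℚ) := by exact_mod_cast hjβ
  have c2 : ((β:ℚ)) ≤ (α:ℚ) := by exact_mod_cast hβα
  have c0 : (0:ℚ) ≤ (j:ℚ) := by positivity
  nlinarith [mul_nonneg (mul_nonneg c0 c0) (sub_nonneg.2 c2)]
end

section
/- Let r ≥ 2 and b be coprime integers with 0 < b < r, and write f(j) = \overline{bj}(r−\overline{bj})/(2r) where \overline{x} is the residue of x mod r. Then for every integer m ≥ 2, f(m) + f(m+1) ≥ f(1). Consequently, setting l(n) = Σ_{j=1}^{n−1} f(j), one has l(m+2) ≥ l(m) + l(2) for all m ≥ 2. -/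
/-- Two-step superadditivity of Reid's correction term: f(m)+f(m+1) ≥ f(1)
and hence l(m+2) ≥ l(m) + l(2) for m ≥ 2. -/
theorem stmt_4 (r b : ℕ) (hr : 2 ≤ r) (hb0 : 0 < b) (hbr : b < r)
    (hcop : Nat.Coprime b r)
    (f : ℕ → ℚ)
    (hf : ∀ j, f j = ((b * j % r : ℕ) : ℚ) * ((r : ℚ) - (b * j % r : ℕ)) / (2 * r))
    (l : ℕ → ℚ)
    (hl : ∀ n, l n = ∑ j ∈ Finset.Icc 1 (n - 1), f j) :
    (∀ m, 2 ≤ m → f m + f (m + 1) ≥ f 1) ∧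
      (∀ m, 2 ≤ m → l (m + 2) ≥ l m + l 2) := by
  have hrQ : (0 : ℚ) < (r : ℚ) := by positivity
  have key : ∀ m : ℕ, f m + f (m + 1) ≥ f 1 := by
    intro m
    set x := b * m % r with hxdef
    have hx : x < r := Nat.mod_lt _ (by omega)
    have hb1 : b * 1 % r = b := by simp [Nat.mod_eq_of_lt hbr]
    have hy : b * (m + 1) % r = (x + b) % r := by
      rw [Nat.mul_add, Nat.add_mod, mul_one, Nat.mod_eq_of_lt hbr]
    rw [hf, hf, hf, hb1, hy]
    by_cases hc : x + b < r
    · rw [Nat.mod_eq_of_lt hc]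
      rw [ge_iff_le, ← add_div, div_le_div_iff₀ (by positivity) (by positivity)]
      have hxr : (x : ℚ) + b ≤ r := by exact_mod_cast hc.le
      have hx0 : (0 : ℚ) ≤ x := by positivity
      simp only [← hxdef]
      push_cast
      nlinarith [mul_nonneg hx0 (sub_nonneg.mpr hxr)]
    · have h2 : (x + b) % r = x + b - r := by
        rw [Nat.mod_eq_sub_mod (by omega), Nat.mod_eq_of_lt (by omega)]
      rw [h2]
      set y := x + b - r with hydef
      have hy1 : y < b := by omega
      have hxy : (x : ℚ) = (r : ℚ) - b + y := by
        have : x = r - b + y := by omega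
        rw [this]; push_cast [Nat.sub_le_iff_le_add.mpr (by omega : r ≤ b + r)]
        push_cast [hbr.le]; ring
      rw [ge_iff_le, ← add_div, div_le_div_iff₀ (by positivity) (by positivity)]
      have hy0 : (0 : ℚ) ≤ y := by positivity
      have hyb : (y : ℚ) ≤ b := by exact_mod_cast hy1.le
      simp only [← hxdef]
      rw [hxy]
      nlinarith [mul_nonneg hy0 (sub_nonneg.mpr hyb)]
  refine ⟨fun m _ => key m, fun m hm => ?_⟩
  have hsplit : l (m + 2) = l m + f m + f (m + 1) := by
    rw [hl, hl]
    have h1 : m + 2 - 1 = (m - 1 + 1) + 1 := by omega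
    rw [h1, Finset.sum_Icc_succ_top (by omega), Finset.sum_Icc_succ_top (by omega)]
    have h2 : m - 1 + 1 = m := by omega
    rw [h2]
  have hl2 : l 2 = f 1 := by
    rw [hl]; simp
  rw [hsplit, hl2]
  linarith [key m]
end

section
/- Let r ≥ 43 and b be coprime integers with 0 < b < r. Then Σ_{j=1}^{11} \overline{bj}(r−\overline{bj})/(2r) ≥ 27, where \overline{x} is the residue of x mod r. -/
/-- A sum of a function over a finset of `n` distinct positive naturals is at least
the sum over `{1,...,n}`, provided the function is suitably monotone. -/
lemma stmt7_sum_lb (g : ℕ → ℚ) :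
    ∀ (n : ℕ) (S : Finset ℕ), S.card = n → (∀ x ∈ S, 1 ≤ x) →
      (∀ k x, 1 ≤ k → k ≤ n → x ∈ S → k ≤ x → g k ≤ g x) →
      ∑ k ∈ Finset.Icc 1 n, g k ≤ ∑ x ∈ S, g x := by
  intro n
  induction n with
  | zero =>
      intro S hcard _ _
      have : S = ∅ := Finset.card_eq_zero.mp hcard
      simp [this]
  | succ n ih =>
      intro S hcard hpos hmono
      have hne : S.Nonempty := Finset.card_pos.mp (by omega)
      set M := S.max' hne with hM
      have hMS : M ∈ S := S.max'_mem hne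
      have hle : ∀ x ∈ S, x ≤ M := fun x hx => S.le_max' x hx
      have hsub : S ⊆ Finset.Icc 1 M := by
        intro x hx
        exact Finset.mem_Icc.mpr ⟨hpos x hx, hle x hx⟩
      have hMn : n + 1 ≤ M := by
        have := Finset.card_le_card hsub
        rw [hcard, Nat.card_Icc] at this
        omega
      have hcard' : (S.erase M).card = n := by
        rw [Finset.card_erase_of_mem hMS, hcard]
        omega
      have hstep : ∑ k ∈ Finset.Icc 1 (n+1), g k
          = ∑ k ∈ Finset.Icc 1 n, g k + g (n+1) :=
        Finset.sum_Icc_succ_top (by omega) g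
      have hS : ∑ x ∈ S, g x = ∑ x ∈ S.erase M, g x + g M :=
        (Finset.sum_erase_add S g hMS).symm
      have h1 : ∑ k ∈ Finset.Icc 1 n, g k ≤ ∑ x ∈ S.erase M, g x := by
        apply ih (S.erase M) hcard'
        · intro x hx; exact hpos x (Finset.mem_of_mem_erase hx)
        · intro k x hk hkn hx hkx
          exact hmono k x hk (by omega) (Finset.mem_of_mem_erase hx) hkx
      have h2 : g (n+1) ≤ g M := hmono (n+1) M (by omega) le_rfl hMS hMn
      rw [hstep, hS]
      exact add_le_add h1 h2

lemma stmt7_mono_aux (r k y : ℕ) (hky : k ≤ y) (h2y : 2 * y ≤ r) :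
    (k:ℚ) * ((r:ℚ) - k) ≤ (y:ℚ) * ((r:ℚ) - y) := by
  have hkq : (k : ℚ) ≤ (y : ℚ) := by exact_mod_cast hky
  have h2yq : 2 * (y : ℚ) ≤ (r : ℚ) := by exact_mod_cast h2y
  have hprod : (0:ℚ) ≤ ((y:ℚ) - k) * ((r:ℚ) - y - k) :=
    mul_nonneg (by linarith) (by linarith)
  nlinarith [hprod]

lemma stmt7_final_aux (r T : ℚ) (hr : 43 ≤ r) (h : 66 * r - 506 ≤ T) :
    27 * (2 * r) ≤ T := by nlinarith

/-- l(Q,12) ≥ 27 for any basket singularity of index r ≥ 43. -/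
theorem stmt_7 (r b : ℕ) (hr : 43 ≤ r) (hb0 : 0 < b) (hbr : b < r)
    (hcop : Nat.Coprime b r) :
    ∑ j ∈ Finset.Icc 1 11,
        ((b * j % r : ℕ) : ℚ) * ((r : ℚ) - (b * j % r : ℕ)) / (2 * r) ≥ 27 := by
  have hr0 : 0 < r := by omega
  set x : ℕ → ℕ := fun j => b * j % r with hxdef
  have hxlt : ∀ j, x j < r := fun j => Nat.mod_lt _ hr0
  have hxpos : ∀ j ∈ Finset.Icc 1 11, 0 < x j := by
    intro j hj
    rw [Finset.mem_Icc] at hj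
    rcases Nat.eq_zero_or_pos (x j) with h0 | h
    · exfalso
      have hdvd : r ∣ b * j := Nat.dvd_of_mod_eq_zero h0
      have : r ∣ j := (Nat.Coprime.dvd_of_dvd_mul_left hcop.symm) hdvd
      have := Nat.le_of_dvd (by omega) this
      omega
    · exact h
  -- the "folded" residues
  set m : ℕ → ℕ := fun j => min (x j) (r - x j) with hmdef
  -- core fact 1: x is injective on [1,11]
  have hxinj : ∀ j ∈ Finset.Icc 1 11, ∀ k ∈ Finset.Icc 1 11, x j = x k → j = k := by
    intro j hj k hk hxe
    rw [Finset.mem_Icc] at hj hk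
    have hmod : b * j ≡ b * k [MOD r] := hxe
    have : j ≡ k [MOD r] := Nat.ModEq.cancel_left_of_coprime hcop.symm hmod
    have hj' : j % r = j := Nat.mod_eq_of_lt (by omega)
    have hk' : k % r = k := Nat.mod_eq_of_lt (by omega)
    unfold Nat.ModEq at this
    omega
  -- core fact 2: no two residues sum to r
  have hxsum : ∀ j ∈ Finset.Icc 1 11, ∀ k ∈ Finset.Icc 1 11, x j + x k = r → False := by
    intro j hj k hk hs
    rw [Finset.mem_Icc] at hj hk
    have : (b * j + b * k) % r = 0 := by
      have := Nat.add_mod (b * j) (b * k) r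
      rw [hs] at this
      simpa using this
    have hdvd : r ∣ b * (j + k) := by
      rw [Nat.mul_add]
      exact Nat.dvd_of_mod_eq_zero this
    have : r ∣ j + k := (Nat.Coprime.dvd_of_dvd_mul_left hcop.symm) hdvd
    have := Nat.le_of_dvd (by omega) this
    omega
  -- m is injective on [1,11]
  have hminj : Set.InjOn m (Finset.Icc 1 11 : Finset ℕ) := by
    intro j hj k hk hme
    simp only [Finset.coe_Icc, Set.mem_Icc] at hj hk
    have hj' : j ∈ Finset.Icc 1 11 := Finset.mem_Icc.mpr hj
    have hk' : k ∈ Finset.Icc 1 11 := Finset.mem_Icc.mpr hk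
    have h1 := hxlt j
    have h2 := hxlt k
    have h3 := hxpos j hj'
    have h4 := hxpos k hk'
    have : x j = x k ∨ x j + x k = r := by
      simp only [hmdef] at hme
      omega
    rcases this with h | h
    · exact hxinj j hj' k hk' h
    · exact absurd h (fun hh => hxsum j hj' k hk' hh)
  -- rewrite each term using m
  have hterm : ∀ j ∈ Finset.Icc 1 11,
      ((x j : ℚ)) * ((r : ℚ) - (x j)) = ((m j : ℚ)) * ((r : ℚ) - (m j)) := by
    intro j hj
    have hlt := hxlt j
    rcases min_cases (x j) (r - x j) with ⟨he, _⟩ | ⟨he, _⟩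
    · rw [hmdef]; simp only [he]
    · rw [hmdef]
      simp only [he]
      have hc : ((r - x j : ℕ) : ℚ) = (r : ℚ) - (x j : ℚ) := by
        push_cast [Nat.cast_sub (le_of_lt hlt)]; ring
      rw [hc]; ring
  -- properties of the image set
  set S : Finset ℕ := (Finset.Icc 1 11).image m with hSdef
  have hScard : S.card = 11 := by
    rw [hSdef, Finset.card_image_of_injOn hminj, Nat.card_Icc]
  have hSpos : ∀ y ∈ S, 1 ≤ y := by
    intro y hy
    rw [hSdef, Finset.mem_image] at hy
    obtain ⟨j, hj, rfl⟩ := hy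
    have := hxpos j hj
    have := hxlt j
    simp only [hmdef]
    omega
  have hShalf : ∀ y ∈ S, 2 * y ≤ r := by
    intro y hy
    rw [hSdef, Finset.mem_image] at hy
    obtain ⟨j, hj, rfl⟩ := hy
    have := hxlt j
    simp only [hmdef]
    omega
  -- the monotone comparison function
  set g : ℕ → ℚ := fun y => (y : ℚ) * ((r : ℚ) - y) with hgdef
  have hmono : ∀ k y, 1 ≤ k → k ≤ 11 → y ∈ S → k ≤ y → g k ≤ g y :=
    fun k y _ _ hy hky => stmt7_mono_aux r k y hky (hShalf y hy)
  have hkey : ∑ k ∈ Finset.Icc 1 11, g k ≤ ∑ y ∈ S, g y :=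
    stmt7_sum_lb g 11 S hScard hSpos hmono
  have himg : ∑ y ∈ S, g y = ∑ j ∈ Finset.Icc 1 11, g (m j) := by
    rw [hSdef]
    exact Finset.sum_image (fun a ha b hb h => hminj ha hb h)
  have hrq : (43 : ℚ) ≤ (r : ℚ) := by exact_mod_cast hr
  have hrpos : (0 : ℚ) < 2 * r := by positivity
  have hsum : (∑ j ∈ Finset.Icc 1 11,
      ((b * j % r : ℕ) : ℚ) * ((r : ℚ) - (b * j % r : ℕ)))
      = ∑ j ∈ Finset.Icc 1 11, g (m j) :=
    Finset.sum_congr rfl (fun j hj => hterm j hj)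
  rw [ge_iff_le, ← Finset.sum_div, hsum, le_div_iff₀ hrpos]
  have hcomp : ∑ k ∈ Finset.Icc 1 11, g k = 66 * (r : ℚ) - 506 := by
    simp only [hgdef]
    simp [Finset.sum_Icc_succ_top]
    ring
  rw [himg, hcomp] at hkey
  exact stmt7_final_aux (r : ℚ) (∑ j ∈ Finset.Icc 1 11, g (m j)) hrq hkey
end
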